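/- Let 𝒬 ⊆ 𝒟 be uniformly integrable and X ∈ L¹. Then X ∈ L¹(𝒬) := {Y ∈ L⁰ : lim_{a→∞} sup_{Z∈𝒬} 𝔼[Z|Y|𝟙_{|Y|>a}] = 0} if and only if the family X𝒬 = {XZ : Z ∈ 𝒬} is uniformly integrable. -/

import Mathlib

open MeasureTheory Filter
open scoped ENNReal

/-- Uniform integrability of a family of functions:
`lim_{a→∞} sup_{Y ∈ G} 𝔼[|Y| 𝟙_{|Y|>a}] = 0`. -/
def UnifIntFamily {Ω : Type*} [MeasurableSpace Ω] (ℙ : Measure Ω)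
    (G : Set (Ω → ℝ)) : Prop :=
  Tendsto (fun a : ℝ => ⨆ Y ∈ G, ∫⁻ ω in {ω | a < |Y ω|}, ENNReal.ofReal |Y ω| ∂ℙ)
    atTop (nhds 0)

section Helpers
variable {Ω : Type*} [MeasurableSpace Ω] {ℙ : Measure Ω}

lemma tail_congr {s s' : Set Ω} {F F' : Ω → ℝ≥0∞}
    (hs : s =ᵐ[ℙ] s') (hF : F =ᵐ[ℙ] F') :
    ∫⁻ ω in s, F ω ∂ℙ = ∫⁻ ω in s', F' ω ∂ℙ := by
  rw [Measure.restrict_congr_set hs]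
  exact lintegral_congr_ae (hF.filter_mono (ae_mono Measure.restrict_le_self))

lemma set_ae_congr {f f' : Ω → ℝ} (h : f =ᵐ[ℙ] f') (a : ℝ) :
    {ω | a < f ω} =ᵐ[ℙ] {ω | a < f' ω} :=
  h.mono fun ω hω => by change (a < f ω) = (a < f' ω); rw [hω]

lemma meas_abs_tendsto {X : Ω → ℝ} (hX : Integrable X ℙ) :
    Tendsto (fun a : ℝ => ℙ {ω | a < |X ω|}) atTop (nhds 0) := by
  rw [ENNReal.tendsto_nhds_zero]
  intro ε hε
  set I := ∫⁻ ω, ENNReal.ofReal |X ω| ∂ℙ with hIdef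
  have hIfin : I ≠ ∞ := by
    have h2 := hX.2
    rw [HasFiniteIntegral] at h2
    have : I = ∫⁻ ω, ‖X ω‖₊ ∂ℙ := by
      refine lintegral_congr fun ω => ?_
      rw [← Real.norm_eq_abs]; exact ofReal_norm (X ω)
    rw [this]; exact h2.ne
  rcases eq_top_or_lt_top ε with hε' | hε'
  · filter_upwards with a; simp [hε']
  have hIε : I / ε ≠ ∞ := by
    rw [Ne, ENNReal.div_eq_top]
    push_neg
    exact ⟨fun _ => hε.ne', fun h => absurd h hIfin⟩
  filter_upwards [eventually_ge_atTop ((I / ε).toReal + 1)] with a ha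
  have ha0 : 0 < a := lt_of_lt_of_le (by positivity) ha
  have hmarkov : ENNReal.ofReal a * ℙ {ω | a < |X ω|} ≤ I := by
    have hsub : {ω | a < |X ω|} ⊆ {ω | ENNReal.ofReal a ≤ ENNReal.ofReal |X ω|} :=
      fun ω hω => ENNReal.ofReal_le_ofReal (le_of_lt hω)
    calc ENNReal.ofReal a * ℙ {ω | a < |X ω|}
        ≤ ENNReal.ofReal a * ℙ {ω | ENNReal.ofReal a ≤ ENNReal.ofReal |X ω|} :=
          mul_le_mul_right (measure_mono hsub) _
      _ ≤ I := mul_meas_ge_le_lintegral₀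
          (((ENNReal.continuous_ofReal.comp continuous_abs).measurable).comp_aemeasurable
            hX.aemeasurable) _
  have h1 : ℙ {ω | a < |X ω|} ≤ I / ENNReal.ofReal a := by
    rw [ENNReal.le_div_iff_mul_le (Or.inl (by simp [ha0])) (Or.inl ENNReal.ofReal_ne_top)]
    rw [mul_comm]; exact hmarkov
  refine h1.trans ?_
  rw [ENNReal.div_le_iff_le_mul (Or.inr hε'.ne) (Or.inl (by simp [ha0]))]
  calc I = I / ε * ε := (ENNReal.div_mul_cancel hε.ne' hε'.ne).symm
    _ ≤ ENNReal.ofReal a * ε := by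
        gcongr
        calc I / ε = ENNReal.ofReal (I / ε).toReal := (ENNReal.ofReal_toReal hIε).symm
          _ ≤ ENNReal.ofReal a := ENNReal.ofReal_le_ofReal (by linarith)
    _ = ε * ENNReal.ofReal a := mul_comm _ _

lemma est_fwd {f g : Ω → ℝ} (hf : Measurable f) (hg : Measurable g)
    (hg0 : ∀ ω, 0 ≤ g ω) {a b : ℝ} (ha : 0 < a) :
    ∫⁻ ω in {ω | b < g ω * f ω}, ENNReal.ofReal (g ω * f ω) ∂ℙ ≤
      (∫⁻ ω in {ω | a < f ω}, ENNReal.ofReal (g ω * f ω) ∂ℙ) +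
        ENNReal.ofReal a * ∫⁻ ω in {ω | b / a < g ω}, ENNReal.ofReal (g ω) ∂ℙ := by
  set S := {ω | b < g ω * f ω} with hS
  have hsub : S ⊆ {ω | a < f ω} ∪ (S ∩ {ω | f ω ≤ a}) := by
    intro ω hω
    by_cases h : a < f ω
    · exact Or.inl h
    · exact Or.inr ⟨hω, not_lt.mp h⟩
  calc ∫⁻ ω in S, ENNReal.ofReal (g ω * f ω) ∂ℙ
      ≤ ∫⁻ ω in {ω | a < f ω} ∪ (S ∩ {ω | f ω ≤ a}), ENNReal.ofReal (g ω * f ω) ∂ℙ :=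
        lintegral_mono_set hsub
    _ ≤ (∫⁻ ω in {ω | a < f ω}, ENNReal.ofReal (g ω * f ω) ∂ℙ) +
        ∫⁻ ω in S ∩ {ω | f ω ≤ a}, ENNReal.ofReal (g ω * f ω) ∂ℙ :=
        lintegral_union_le _ _ _
    _ ≤ (∫⁻ ω in {ω | a < f ω}, ENNReal.ofReal (g ω * f ω) ∂ℙ) +
        ENNReal.ofReal a * ∫⁻ ω in {ω | b / a < g ω}, ENNReal.ofReal (g ω) ∂ℙ := by
        gcongr
        have hmeas : MeasurableSet (S ∩ {ω | f ω ≤ a}) :=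
          ((measurableSet_lt measurable_const (hg.mul hf))).inter
            (measurableSet_le hf measurable_const)
        calc ∫⁻ ω in S ∩ {ω | f ω ≤ a}, ENNReal.ofReal (g ω * f ω) ∂ℙ
            ≤ ∫⁻ ω in S ∩ {ω | f ω ≤ a}, ENNReal.ofReal a * ENNReal.ofReal (g ω) ∂ℙ := by
              refine setLIntegral_mono' hmeas fun ω hω => ?_
              rw [← ENNReal.ofReal_mul (le_of_lt ha)]
              refine ENNReal.ofReal_le_ofReal ?_
              rw [mul_comm a (g ω)]
              exact mul_le_mul_of_nonneg_left hω.2 (hg0 ω)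
          _ ≤ ∫⁻ ω in {ω | b / a < g ω}, ENNReal.ofReal a * ENNReal.ofReal (g ω) ∂ℙ := by
              refine lintegral_mono_set fun ω hω => ?_
              have h1 : b < g ω * a :=
                lt_of_lt_of_le hω.1 (mul_le_mul_of_nonneg_left hω.2 (hg0 ω))
              exact (div_lt_iff₀ ha).mpr h1
          _ = ENNReal.ofReal a * ∫⁻ ω in {ω | b / a < g ω}, ENNReal.ofReal (g ω) ∂ℙ :=
              lintegral_const_mul _ (ENNReal.measurable_ofReal.comp hg)

lemma est_bwd {f g : Ω → ℝ} (hf : Measurable f) (hg : Measurable g) {a b : ℝ} :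
    ∫⁻ ω in {ω | a < f ω}, ENNReal.ofReal (g ω * f ω) ∂ℙ ≤
      (∫⁻ ω in {ω | b < g ω * f ω}, ENNReal.ofReal (g ω * f ω) ∂ℙ) +
        ENNReal.ofReal b * ℙ {ω | a < f ω} := by
  set S := {ω | a < f ω} with hS
  have hsub : S ⊆ {ω | b < g ω * f ω} ∪ (S ∩ {ω | g ω * f ω ≤ b}) := by
    intro ω hω
    by_cases h : b < g ω * f ω
    · exact Or.inl h
    · exact Or.inr ⟨hω, not_lt.mp h⟩
  have hmeas : MeasurableSet (S ∩ {ω | g ω * f ω ≤ b}) :=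
    (measurableSet_lt measurable_const hf).inter
      (measurableSet_le (hg.mul hf) measurable_const)
  calc ∫⁻ ω in S, ENNReal.ofReal (g ω * f ω) ∂ℙ
      ≤ ∫⁻ ω in {ω | b < g ω * f ω} ∪ (S ∩ {ω | g ω * f ω ≤ b}),
          ENNReal.ofReal (g ω * f ω) ∂ℙ := lintegral_mono_set hsub
    _ ≤ (∫⁻ ω in {ω | b < g ω * f ω}, ENNReal.ofReal (g ω * f ω) ∂ℙ) +
        ∫⁻ ω in S ∩ {ω | g ω * f ω ≤ b}, ENNReal.ofReal (g ω * f ω) ∂ℙ :=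
        lintegral_union_le _ _ _
    _ ≤ (∫⁻ ω in {ω | b < g ω * f ω}, ENNReal.ofReal (g ω * f ω) ∂ℙ) +
        ENNReal.ofReal b * ℙ S := by
        gcongr
        calc ∫⁻ ω in S ∩ {ω | g ω * f ω ≤ b}, ENNReal.ofReal (g ω * f ω) ∂ℙ
            ≤ ∫⁻ _ω in S ∩ {ω | g ω * f ω ≤ b}, ENNReal.ofReal b ∂ℙ :=
              setLIntegral_mono' hmeas fun ω hω => ENNReal.ofReal_le_ofReal hω.2
          _ = ENNReal.ofReal b * ℙ (S ∩ {ω | g ω * f ω ≤ b}) := setLIntegral_const _ _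
          _ ≤ ENNReal.ofReal b * ℙ S :=
              mul_le_mul_right (measure_mono Set.inter_subset_left) _

lemma reps {Z X : Ω → ℝ} (hZint : Integrable Z ℙ) (hZ0 : ∀ᵐ ω ∂ℙ, 0 ≤ Z ω)
    (hX : Integrable X ℙ) :
    ∃ Z' X' : Ω → ℝ, Measurable Z' ∧ Measurable X' ∧ (∀ ω, 0 ≤ Z' ω) ∧
      (∀ a : ℝ, ∫⁻ ω in {ω | a < |X ω|}, ENNReal.ofReal (Z ω * |X ω|) ∂ℙ
          = ∫⁻ ω in {ω | a < |X' ω|}, ENNReal.ofReal (Z' ω * |X' ω|) ∂ℙ) ∧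
      (∀ b : ℝ, ∫⁻ ω in {ω | b < |X ω * Z ω|}, ENNReal.ofReal |X ω * Z ω| ∂ℙ
          = ∫⁻ ω in {ω | b < Z' ω * |X' ω|}, ENNReal.ofReal (Z' ω * |X' ω|) ∂ℙ) ∧
      (∀ c : ℝ, ∫⁻ ω in {ω | c < |Z ω|}, ENNReal.ofReal |Z ω| ∂ℙ
          = ∫⁻ ω in {ω | c < Z' ω}, ENNReal.ofReal (Z' ω) ∂ℙ) ∧
      (∀ a : ℝ, ℙ {ω | a < |X' ω|} = ℙ {ω | a < |X ω|}) := by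
  obtain ⟨X', hX'm, hXeq⟩ : ∃ X', Measurable X' ∧ X =ᵐ[ℙ] X' :=
    ⟨hX.1.mk X, hX.1.stronglyMeasurable_mk.measurable, hX.1.ae_eq_mk⟩
  obtain ⟨Z₀, hZ₀m, hZeq₀⟩ : ∃ Z₀, Measurable Z₀ ∧ Z =ᵐ[ℙ] Z₀ :=
    ⟨hZint.1.mk Z, hZint.1.stronglyMeasurable_mk.measurable, hZint.1.ae_eq_mk⟩
  set Z' : Ω → ℝ := fun ω => max (Z₀ ω) 0 with hZ'def
  have hZ'm : Measurable Z' := hZ₀m.max measurable_const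
  have hZ'0 : ∀ ω, 0 ≤ Z' ω := fun ω => le_max_right _ _
  have hZeq : Z =ᵐ[ℙ] Z' := by
    filter_upwards [hZeq₀, hZ0] with ω h1 h2
    simp [hZ'def, ← h1, max_eq_left h2]
  have hD : (fun ω => |X ω|) =ᵐ[ℙ] fun ω => |X' ω| := hXeq.mono fun ω h => show |X ω| = |X' ω| by rw [h]
  have hA : (fun ω => Z ω * |X ω|) =ᵐ[ℙ] fun ω => Z' ω * |X' ω| := by
    filter_upwards [hXeq, hZeq] with ω h1 h2
    show Z ω * |X ω| = Z' ω * |X' ω|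
    rw [h1, h2]
  have hB : (fun ω => |X ω * Z ω|) =ᵐ[ℙ] fun ω => Z' ω * |X' ω| := by
    filter_upwards [hXeq, hZeq] with ω h1 h2
    show |X ω * Z ω| = Z' ω * |X' ω|
    rw [h1, h2, abs_mul, abs_of_nonneg (hZ'0 ω), mul_comm]
  have hC : (fun ω => |Z ω|) =ᵐ[ℙ] Z' := by
    filter_upwards [hZeq] with ω h1
    show |Z ω| = Z' ω
    rw [h1, abs_of_nonneg (hZ'0 ω)]
  refine ⟨Z', X', hZ'm, hX'm, hZ'0, ?_, ?_, ?_, ?_⟩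
  · exact fun a => tail_congr (set_ae_congr hD a) (hA.mono fun ω h => congrArg ENNReal.ofReal h)
  · exact fun b => tail_congr (set_ae_congr hB b) (hB.mono fun ω h => congrArg ENNReal.ofReal h)
  · exact fun c => tail_congr (set_ae_congr hC c) (hC.mono fun ω h => congrArg ENNReal.ofReal h)
  · exact fun a => (measure_congr (set_ae_congr hD a)).symm

end Helpers

/-- For `𝒬 ⊆ 𝒟` uniformly integrable and `X ∈ L¹`: `X ∈ L¹(𝒬)` iff the family
`X𝒬 = {XZ : Z ∈ 𝒬}` is uniformly integrable. -/
theorem stmt8 {Ω : Type*} [MeasurableSpace Ω] (ℙ : Measure Ω) [IsProbabilityMeasure ℙ]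
    (𝒬 : Set (Ω → ℝ))
    (h𝒬D : 𝒬 ⊆ {Z : Ω → ℝ | Integrable Z ℙ ∧ (∀ᵐ ω ∂ℙ, 0 ≤ Z ω) ∧ (∫ ω, Z ω ∂ℙ) = 1})
    (h𝒬UI : UnifIntFamily ℙ 𝒬)
    (X : Ω → ℝ) (hX : Integrable X ℙ) :
    (Tendsto (fun a : ℝ => ⨆ Z ∈ 𝒬, ∫⁻ ω in {ω | a < |X ω|},
        ENNReal.ofReal (Z ω * |X ω|) ∂ℙ) atTop (nhds 0))
      ↔ UnifIntFamily ℙ ((fun Z => fun ω => X ω * Z ω) '' 𝒬) := by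
  constructor
  · intro h
    unfold UnifIntFamily
    simp only [iSup_image]
    rw [ENNReal.tendsto_nhds_zero]
    intro ε hε
    have hε2 : (0 : ℝ≥0∞) < ε / 2 := ENNReal.half_pos hε.ne'
    obtain ⟨a₀, ha₀⟩ := eventually_atTop.mp (ENNReal.tendsto_nhds_zero.mp h (ε / 2) hε2)
    set a := max a₀ 1 with hadef
    have haa : (0 : ℝ) < a := lt_of_lt_of_le one_pos (le_max_right _ _)
    have hT1 : (⨆ Z ∈ 𝒬, ∫⁻ ω in {ω | a < |X ω|}, ENNReal.ofReal (Z ω * |X ω|) ∂ℙ) ≤ ε / 2 :=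
      ha₀ a (le_max_left _ _)
    set δ := ε / 2 / ENNReal.ofReal a with hδdef
    have hδpos : 0 < δ := ENNReal.div_pos hε2.ne' ENNReal.ofReal_ne_top
    obtain ⟨c₀, hc₀⟩ := eventually_atTop.mp (ENNReal.tendsto_nhds_zero.mp h𝒬UI δ hδpos)
    filter_upwards [eventually_ge_atTop (a * c₀)] with b hb
    refine iSup₂_le fun Z hZ => ?_
    obtain ⟨hZint, hZ0, -⟩ := h𝒬D hZ
    obtain ⟨Z', X', hZ'm, hX'm, hZ'0, E1, E2, E3, E4⟩ := reps hZint hZ0 hX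
    have hba : c₀ ≤ b / a := (le_div_iff₀ haa).mpr (by rw [mul_comm]; exact hb)
    calc ∫⁻ ω in {ω | b < |X ω * Z ω|}, ENNReal.ofReal |X ω * Z ω| ∂ℙ
        = ∫⁻ ω in {ω | b < Z' ω * |X' ω|}, ENNReal.ofReal (Z' ω * |X' ω|) ∂ℙ := E2 b
      _ ≤ (∫⁻ ω in {ω | a < |X' ω|}, ENNReal.ofReal (Z' ω * |X' ω|) ∂ℙ) +
          ENNReal.ofReal a * ∫⁻ ω in {ω | b / a < Z' ω}, ENNReal.ofReal (Z' ω) ∂ℙ :=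
          est_fwd hX'm.abs hZ'm hZ'0 haa
      _ = (∫⁻ ω in {ω | a < |X ω|}, ENNReal.ofReal (Z ω * |X ω|) ∂ℙ) +
          ENNReal.ofReal a * ∫⁻ ω in {ω | b / a < |Z ω|}, ENNReal.ofReal |Z ω| ∂ℙ := by
          rw [E1, E3]
      _ ≤ ε / 2 + ENNReal.ofReal a * δ := by
          refine add_le_add ?_ (mul_le_mul_right ?_ _)
          · exact le_trans
              (le_biSup (fun Z : Ω → ℝ =>
                ∫⁻ ω in {ω | a < |X ω|}, ENNReal.ofReal (Z ω * |X ω|) ∂ℙ) hZ) hT1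
          · exact le_trans
              (le_biSup (fun Z : Ω → ℝ =>
                ∫⁻ ω in {ω | b / a < |Z ω|}, ENNReal.ofReal |Z ω| ∂ℙ) hZ) (hc₀ _ hba)
      _ ≤ ε / 2 + ε / 2 := add_le_add le_rfl ENNReal.mul_div_le
      _ = ε := ENNReal.add_halves ε
  · intro h
    unfold UnifIntFamily at h
    simp only [iSup_image] at h
    rw [ENNReal.tendsto_nhds_zero]
    intro ε hε
    have hε2 : (0 : ℝ≥0∞) < ε / 2 := ENNReal.half_pos hε.ne'
    obtain ⟨b₀, hb₀⟩ := eventually_atTop.mp (ENNReal.tendsto_nhds_zero.mp h (ε / 2) hε2)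
    have hmb : Tendsto (fun a : ℝ => ENNReal.ofReal b₀ * ℙ {ω | a < |X ω|}) atTop (nhds 0) := by
      have := ENNReal.Tendsto.const_mul (meas_abs_tendsto hX)
        (Or.inr ENNReal.ofReal_ne_top) (a := ENNReal.ofReal b₀)
      simpa using this
    filter_upwards [ENNReal.tendsto_nhds_zero.mp hmb (ε / 2) hε2] with a hma
    refine iSup₂_le fun Z hZ => ?_
    obtain ⟨hZint, hZ0, -⟩ := h𝒬D hZ
    obtain ⟨Z', X', hZ'm, hX'm, hZ'0, E1, E2, E3, E4⟩ := reps hZint hZ0 hX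
    calc ∫⁻ ω in {ω | a < |X ω|}, ENNReal.ofReal (Z ω * |X ω|) ∂ℙ
        = ∫⁻ ω in {ω | a < |X' ω|}, ENNReal.ofReal (Z' ω * |X' ω|) ∂ℙ := E1 a
      _ ≤ (∫⁻ ω in {ω | b₀ < Z' ω * |X' ω|}, ENNReal.ofReal (Z' ω * |X' ω|) ∂ℙ) +
          ENNReal.ofReal b₀ * ℙ {ω | a < |X' ω|} := est_bwd hX'm.abs hZ'm
      _ = (∫⁻ ω in {ω | b₀ < |X ω * Z ω|}, ENNReal.ofReal |X ω * Z ω| ∂ℙ) +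
          ENNReal.ofReal b₀ * ℙ {ω | a < |X ω|} := by rw [← E2, E4]
      _ ≤ ε / 2 + ε / 2 :=
          add_le_add
            (le_trans (le_biSup (fun Z : Ω → ℝ =>
              ∫⁻ ω in {ω | b₀ < |X ω * Z ω|}, ENNReal.ofReal |X ω * Z ω| ∂ℙ) hZ)
              (hb₀ b₀ le_rfl))
            hma
      _ = ε := ENNReal.add_halves ε
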